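/- Let V, Q : ℝⁿ → ℝ≥0 be continuous, positive definite, radially unbounded functions. Then there exists a strictly increasing continuous function ζ : ℝ≥0 → ℝ≥0 with ζ(0) = 0 and ζ(s) → ∞ as s → ∞ (i.e., ζ ∈ K∞) such that Q(x) ≥ ζ(V(x)) for all x ∈ ℝⁿ. -/

import Mathlib

open Filter MeasureTheory intervalIntegral Set

/-- From a continuous monotone function `m` vanishing at `0`, positive on `(0,∞)` and
tending to `∞`, the running average `ζ s = (∫₀ˢ m) / s` is a class-`K∞` minorant of `m`. -/
lemma aux_zeta (m : ℝ → ℝ) (hmcont : Continuous m) (hmmono : Monotone m) (hm0 : m 0 = 0)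
    (hmpos : ∀ s : ℝ, 0 < s → 0 < m s) (hmtop : Tendsto m atTop atTop) :
    ∃ ζ : ℝ → ℝ, ContinuousOn ζ (Set.Ici 0) ∧ StrictMonoOn ζ (Set.Ici 0) ∧
      ζ 0 = 0 ∧ (∀ s, 0 ≤ s → 0 ≤ ζ s) ∧
      Filter.Tendsto ζ Filter.atTop Filter.atTop ∧
      ∀ s, 0 ≤ s → ζ s ≤ m s := by
  have hmint : ∀ a b : ℝ, IntervalIntegrable m volume a b :=
    fun a b => hmcont.intervalIntegrable a b
  have hm0le : ∀ s : ℝ, 0 ≤ s → 0 ≤ m s := by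
    intro s hs
    rcases hs.eq_or_lt with h | h
    · rw [← h, hm0]
    · exact (hmpos s h).le
  have hIub : ∀ a b : ℝ, a ≤ b → (∫ t in a..b, m t) ≤ (b - a) * m b := by
    intro a b hab
    have h := intervalIntegral.integral_mono_on (g := fun _ => m b) hab (hmint a b)
      (intervalIntegrable_const) (fun x hx => hmmono hx.2)
    simpa [smul_eq_mul] using h
  have hIlb : ∀ a b : ℝ, a ≤ b → (b - a) * m a ≤ ∫ t in a..b, m t := by
    intro a b hab
    have h := intervalIntegral.integral_mono_on (f := fun _ => m a) hab
      (intervalIntegrable_const) (hmint a b) (fun x hx => hmmono hx.1)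
    simpa [smul_eq_mul] using h
  have hInonneg : ∀ s : ℝ, 0 ≤ s → 0 ≤ ∫ t in (0:ℝ)..s, m t := by
    intro s hs
    have h := hIlb 0 s hs
    rw [hm0] at h
    simpa using h
  have hIstrict : ∀ a : ℝ, 0 < a → (∫ t in (0:ℝ)..a, m t) < a * m a := by
    intro a ha
    have hma : 0 < m a := hmpos a ha
    have hev : ∀ᶠ t in nhds (0:ℝ), m t < m a := by
      refine Filter.Tendsto.eventually_lt_const ?_ (hmcont.tendsto 0)
      rw [hm0]; exact hma
    obtain ⟨δ, hδpos, hδ⟩ := Metric.eventually_nhds_iff.mp hev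
    set c := min (δ/2) (a/2) with hc
    have hc0 : 0 < c := lt_min (by linarith) (by linarith)
    have hca : c < a := lt_of_le_of_lt (min_le_right _ _) (by linarith)
    have hmc : m c < m a := by
      apply hδ
      rw [Real.dist_eq, sub_zero, abs_of_pos hc0]
      exact lt_of_le_of_lt (min_le_left _ _) (by linarith)
    have h1 : (∫ t in (0:ℝ)..c, m t) ≤ c * m c := by
      have := hIub 0 c hc0.le; simpa using this
    have h2 : (∫ t in c..a, m t) ≤ (a - c) * m a := hIub c a hca.le
    have hsplit : (∫ t in (0:ℝ)..c, m t) + (∫ t in c..a, m t) = ∫ t in (0:ℝ)..a, m t :=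
      intervalIntegral.integral_add_adjacent_intervals (hmint 0 c) (hmint c a)
    nlinarith [mul_lt_mul_of_pos_left hmc hc0]
  refine ⟨fun s => (∫ t in (0:ℝ)..s, m t) / s, ?_, ?_, ?_, ?_, ?_, ?_⟩
  · -- continuity on Ici 0
    intro s hs
    rcases (show (0:ℝ) ≤ s from hs).eq_or_lt with h | h
    · -- continuity at 0 within Ici 0 by squeezing between 0 and m
      rw [← h]
      have hz : (fun s => (∫ t in (0:ℝ)..s, m t) / s) 0 = 0 := by simp
      unfold ContinuousWithinAt
      rw [hz]
      have hup : Tendsto m (nhdsWithin 0 (Set.Ici 0)) (nhds 0) := by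
        have : Tendsto m (nhdsWithin 0 (Set.Ici 0)) (nhds (m 0)) :=
          (hmcont.tendsto 0).mono_left nhdsWithin_le_nhds
        rwa [hm0] at this
      refine tendsto_of_tendsto_of_tendsto_of_le_of_le' tendsto_const_nhds hup ?_ ?_
      · filter_upwards [self_mem_nhdsWithin] with t ht
        exact div_nonneg (hInonneg t ht) ht
      · filter_upwards [self_mem_nhdsWithin] with t ht
        rcases (show (0:ℝ) ≤ t from ht).eq_or_lt with h' | h'
        · rw [← h']; simpa using hm0le 0 le_rfl
        · rw [div_le_iff₀ h']
          have := hIub 0 t ht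
          nlinarith
    · -- continuity at interior points
      refine ContinuousAt.continuousWithinAt ?_
      exact ContinuousAt.div
        ((intervalIntegral.continuous_primitive hmint 0).continuousAt)
        continuousAt_id (ne_of_gt h)
  · -- strict monotonicity
    intro a ha b hb hab
    have hb0 : (0:ℝ) < b := lt_of_le_of_lt ha hab
    rcases (show (0:ℝ) ≤ a from ha).eq_or_lt with h | h
    · rw [← h]
      simp only
      rw [show (∫ t in (0:ℝ)..(0:ℝ), m t) / 0 = 0 by simp]
      apply div_pos _ hb0
      have h1 : (b - b/2) * m (b/2) ≤ ∫ t in (b/2)..b, m t := hIlb (b/2) b (by linarith)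
      have h2 : 0 ≤ ∫ t in (0:ℝ)..(b/2), m t := hInonneg (b/2) (by linarith)
      have hsplit := intervalIntegral.integral_add_adjacent_intervals
        (hmint 0 (b/2)) (hmint (b/2) b)
      have hmb2 : 0 < m (b/2) := hmpos _ (by linarith)
      nlinarith
    · simp only
      rw [div_lt_div_iff₀ h hb0]
      have hA := hIstrict a h
      have hB := hIlb a b hab.le
      have hsplit := intervalIntegral.integral_add_adjacent_intervals
        (hmint 0 a) (hmint a b)
      nlinarith [mul_le_mul_of_nonneg_left hB h.le,
        mul_lt_mul_of_pos_right hA (sub_pos.2 hab)]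
  · simp
  · intro s hs
    exact div_nonneg (hInonneg s hs) hs
  · -- tendsto atTop
    have hhalf : Tendsto (fun s : ℝ => m (s/2) / 2) atTop atTop := by
      have h1 : Tendsto (fun s : ℝ => s/2) atTop atTop :=
        Filter.Tendsto.atTop_div_const (by norm_num) tendsto_id
      exact Filter.Tendsto.atTop_div_const (by norm_num) (hmtop.comp h1)
    refine tendsto_atTop_mono' atTop ?_ hhalf
    filter_upwards [Filter.eventually_ge_atTop (1:ℝ)] with s hs1
    have hs : (0:ℝ) < s := by linarith
    rw [le_div_iff₀ hs]
    have h1 : (s - s/2) * m (s/2) ≤ ∫ t in (s/2)..s, m t := hIlb (s/2) s (by linarith)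
    have h2 : 0 ≤ ∫ t in (0:ℝ)..(s/2), m t := hInonneg (s/2) (by linarith)
    have hsplit := intervalIntegral.integral_add_adjacent_intervals
      (hmint 0 (s/2)) (hmint (s/2) s)
    nlinarith
  · -- ζ ≤ m on Ici 0
    intro s hs
    rcases hs.eq_or_lt with h | h
    · rw [← h]; simpa using hm0le 0 le_rfl
    · rw [div_le_iff₀ h]
      have := hIub 0 s hs
      nlinarith

/-- Proposition 2.2 used in the proof of Theorem 1 (inequality (4.6)): for
continuous, positive definite, radially unbounded `V, Q : ℝⁿ → ℝ≥0` there
exists a class-`K∞` function `ζ` with `Q(x) ≥ ζ(V(x))` for all `x`. -/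
theorem stmt_6 (n : ℕ) (V Q : (Fin n → ℝ) → ℝ)
    (hVcont : Continuous V) (hQcont : Continuous Q)
    (hVnonneg : ∀ x, 0 ≤ V x) (hQnonneg : ∀ x, 0 ≤ Q x)
    (hVpos : ∀ x, x ≠ 0 → 0 < V x) (hV0 : V 0 = 0)
    (hQpos : ∀ x, x ≠ 0 → 0 < Q x) (hQ0 : Q 0 = 0)
    (hVrad : ∀ M : ℝ, IsCompact {x | V x ≤ M})
    (hQrad : ∀ M : ℝ, IsCompact {x | Q x ≤ M}) :
    ∃ ζ : ℝ → ℝ, ContinuousOn ζ (Set.Ici 0) ∧ StrictMonoOn ζ (Set.Ici 0) ∧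
      ζ 0 = 0 ∧ (∀ s, 0 ≤ s → 0 ≤ ζ s) ∧
      Filter.Tendsto ζ Filter.atTop Filter.atTop ∧
      ∀ x, ζ (V x) ≤ Q x := by
  by_cases hn : n = 0
  · -- degenerate case: the space is a single point
    subst hn
    refine ⟨id, continuous_id.continuousOn, fun a _ b _ h => h, rfl,
      fun s hs => hs, Filter.tendsto_id, ?_⟩
    intro x
    have hx : x = 0 := funext fun i => i.elim0
    rw [hx, hV0, hQ0]
    simp
  · haveI : Nonempty (Fin n) := ⟨⟨0, Nat.pos_of_ne_zero hn⟩⟩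
    haveI : NoncompactSpace (Fin n → ℝ) := NormedSpace.noncompactSpace ℝ _
    -- upper level sets of V are nonempty
    have hne : ∀ s : ℝ, {x : Fin n → ℝ | s ≤ V x}.Nonempty := by
      intro s
      by_contra h
      rw [Set.not_nonempty_iff_eq_empty] at h
      apply (hVrad s).ne_univ
      rw [Set.eq_univ_iff_forall]
      intro x
      by_contra hx
      have : s ≤ V x := le_of_not_ge hx
      exact Set.eq_empty_iff_forall_notMem.mp h x this
    set f : ℝ → ℝ := fun s => sInf (Q '' {x | s ≤ V x}) with hfdef
    have hbdd : ∀ s : ℝ, BddBelow (Q '' {x | s ≤ V x}) := by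
      intro s
      exact ⟨0, by rintro y ⟨x, _, rfl⟩; exact hQnonneg x⟩
    have hfle : ∀ x, f (V x) ≤ Q x := fun x => csInf_le (hbdd _) ⟨x, show V x ≤ V x from le_rfl, rfl⟩
    have hf0 : ∀ s, 0 ≤ f s := fun s =>
      le_csInf ((hne s).image Q) (by rintro y ⟨x, _, rfl⟩; exact hQnonneg x)
    have hfmono : Monotone f := by
      intro s s' hss'
      exact csInf_le_csInf (hbdd s) ((hne s').image Q)
        (Set.image_mono (fun x hx => le_trans hss' hx))
    have hfpos : ∀ s : ℝ, 0 < s → 0 < f s := by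
      intro s hs
      obtain ⟨x0, hx0⟩ := hne s
      have hKc : IsCompact ({x : Fin n → ℝ | s ≤ V x} ∩ {x | Q x ≤ Q x0}) :=
        (hQrad (Q x0)).inter_left (isClosed_le continuous_const hVcont)
      have hKne : ({x : Fin n → ℝ | s ≤ V x} ∩ {x | Q x ≤ Q x0}).Nonempty :=
        ⟨x0, hx0, show Q x0 ≤ Q x0 from le_rfl⟩
      obtain ⟨x1, hx1K, hx1min⟩ := hKc.exists_isMinOn hKne hQcont.continuousOn
      have hx1ne : x1 ≠ 0 := by
        intro hh
        have h1 : s ≤ V x1 := hx1K.1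
        rw [hh, hV0] at h1
        linarith
      have hx1pos : 0 < Q x1 := hQpos x1 hx1ne
      refine lt_of_lt_of_le hx1pos (le_csInf ((hne s).image Q) ?_)
      rintro y ⟨x, hxV, rfl⟩
      by_cases hq : Q x ≤ Q x0
      · exact isMinOn_iff.mp hx1min x ⟨hxV, hq⟩
      · exact le_trans (isMinOn_iff.mp hx1min x0 ⟨hx0, show Q x0 ≤ Q x0 from le_rfl⟩) (le_of_not_ge hq)
    have hftop : ∀ C : ℝ, ∃ S : ℝ, ∀ s, S ≤ s → C ≤ f s := by
      intro C
      by_cases hC : {x : Fin n → ℝ | Q x ≤ C}.Nonempty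
      · obtain ⟨x2, _, hx2max⟩ := (hQrad C).exists_isMaxOn hC hVcont.continuousOn
        refine ⟨V x2 + 1, fun s hs => le_csInf ((hne s).image Q) ?_⟩
        rintro y ⟨x, hxV, rfl⟩
        by_contra h
        push_neg at h
        have h1 : V x ≤ V x2 := isMaxOn_iff.mp hx2max x h.le
        have : s ≤ V x := hxV
        linarith
      · refine ⟨0, fun s _ => le_csInf ((hne s).image Q) ?_⟩
        rintro y ⟨x, _, rfl⟩
        by_contra h
        push_neg at h
        exact hC ⟨x, h.le⟩
    -- truncated function h
    set h : ℝ → ℝ := fun t => min (f (max t 0)) (max t 0) with hhdef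
    have hhmono : Monotone h :=
      Monotone.min (hfmono.comp (monotone_id.max monotone_const))
        (monotone_id.max monotone_const)
    have hh0 : ∀ t, 0 ≤ h t := fun t => le_min (hf0 _) (le_max_right _ _)
    have hhzero : h 0 = 0 := by
      apply le_antisymm _ (hh0 0)
      have : h 0 ≤ max (0:ℝ) 0 := min_le_right _ _
      simpa using this
    have hhpos : ∀ t : ℝ, 0 < t → 0 < h t := by
      intro t ht
      refine lt_min ?_ (lt_of_lt_of_le ht (le_max_left _ _))
      rw [max_eq_left ht.le]
      exact hfpos t ht
    have hhlef : ∀ s : ℝ, 0 ≤ s → h s ≤ f s := by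
      intro s hs
      have : h s ≤ f (max s 0) := min_le_left _ _
      rwa [max_eq_left hs] at this
    have hhtop : ∀ C : ℝ, ∃ S : ℝ, ∀ t, S ≤ t → C ≤ h t := by
      intro C
      obtain ⟨S, hS⟩ := hftop C
      refine ⟨max S C, fun t ht => le_min ?_ ?_⟩
      · exact hS _ (le_trans (le_trans (le_max_left S C) ht) (le_max_left t 0))
      · exact le_trans (le_trans (le_max_right S C) ht) (le_max_left t 0)
    -- inf-convolution regularization m
    set m : ℝ → ℝ := fun s => ⨅ t : ℝ, (h t + |s - t|) with hmdef
    have hmbdd : ∀ s : ℝ, BddBelow (Set.range fun t => h t + |s - t|) := by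
      intro s
      exact ⟨0, by rintro y ⟨t, rfl⟩; exact add_nonneg (hh0 t) (abs_nonneg _)⟩
    have hmleh : ∀ s, m s ≤ h s := by
      intro s
      have := ciInf_le (hmbdd s) s
      simpa using this
    have hm0le : ∀ s, 0 ≤ m s :=
      fun s => le_ciInf fun t => add_nonneg (hh0 t) (abs_nonneg _)
    have hm0 : m 0 = 0 := le_antisymm (by simpa [hhzero] using hmleh 0) (hm0le 0)
    have hmlip : ∀ s s' : ℝ, m s ≤ m s' + |s - s'| := by
      intro s s'
      have key : ∀ t : ℝ, m s - |s - s'| ≤ h t + |s' - t| := by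
        intro t
        have h1 : m s ≤ h t + |s - t| := ciInf_le (hmbdd s) t
        have h2 : |s - t| ≤ |s - s'| + |s' - t| := abs_sub_le s s' t
        linarith
      have := le_ciInf key
      linarith
    have hmcont : Continuous m := by
      have : LipschitzWith 1 m := by
        apply LipschitzWith.of_dist_le_mul
        intro s s'
        rw [Real.dist_eq, Real.dist_eq, NNReal.coe_one, one_mul, abs_sub_le_iff]
        constructor
        · linarith [hmlip s s']
        · have := hmlip s' s
          rw [abs_sub_comm s' s] at this
          linarith
      exact this.continuous
    have hmmono : Monotone m := by
      intro s s' hss'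
      apply le_ciInf
      intro t
      rcases le_or_gt s t with hst | hst
      · calc m s ≤ h s := hmleh s
          _ ≤ h t := hhmono hst
          _ ≤ h t + |s' - t| := le_add_of_nonneg_right (abs_nonneg _)
      · have habs : |s - t| ≤ |s' - t| := by
          rw [abs_of_pos (sub_pos.2 hst), abs_of_pos (by linarith : (0:ℝ) < s' - t)]
          linarith
        calc m s ≤ h t + |s - t| := ciInf_le (hmbdd s) t
          _ ≤ h t + |s' - t| := by linarith
    have hmlb : ∀ s : ℝ, min (h (s/2)) (s/2) ≤ m s := by
      intro s
      apply le_ciInf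
      intro t
      rcases le_or_gt (s/2) t with h1 | h1
      · exact le_trans (min_le_left _ _)
          (le_trans (hhmono h1) (le_add_of_nonneg_right (abs_nonneg _)))
      · have h2 : s/2 ≤ |s - t| := le_trans (by linarith) (le_abs_self (s - t))
        have := hh0 t
        calc min (h (s/2)) (s/2) ≤ s/2 := min_le_right _ _
          _ ≤ h t + |s - t| := by linarith
    have hmpos : ∀ s : ℝ, 0 < s → 0 < m s := by
      intro s hs
      exact lt_of_lt_of_le (lt_min (hhpos _ (by linarith)) (by linarith)) (hmlb s)
    have hmtop : Filter.Tendsto m Filter.atTop Filter.atTop := by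
      rw [Filter.tendsto_atTop_atTop]
      intro C
      obtain ⟨S, hS⟩ := hhtop C
      refine ⟨max (2*S) (2*C), fun s hs => ?_⟩
      have hs1 : 2*S ≤ s := le_trans (le_max_left _ _) hs
      have hs2 : 2*C ≤ s := le_trans (le_max_right _ _) hs
      refine le_trans (le_min (hS _ (by linarith)) (by linarith)) (hmlb s)
    obtain ⟨ζ, hζc, hζm, hζ0, hζnn, hζtop, hζle⟩ :=
      aux_zeta m hmcont hmmono hm0 hmpos hmtop
    refine ⟨ζ, hζc, hζm, hζ0, hζnn, hζtop, fun x => ?_⟩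
    calc ζ (V x) ≤ m (V x) := hζle _ (hVnonneg x)
      _ ≤ h (V x) := hmleh _
      _ ≤ f (V x) := hhlef _ (hVnonneg x)
      _ ≤ Q x := hfle x
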